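/- If the data and scaling function are such that c1·R1 < c2·R2, then the corresponding member of the Rand-k-Spatial family has strictly smaller mean squared error than the standard Rand-k estimator: E[||x̂^{T} − x̄||²] < E[||x̂^{Rand-k} − x̄||²], where x̂^{Rand-k} = (1/n)·(d/k)·Σ_{i=1}^n h_i. -/

import Mathlib

open Finset

noncomputable section

/-- A size-`k` subset of the coordinate set `{1,…,d}`. -/
abbrev KSub (d k : ℕ) := {S : Finset (Fin d) // S.card = k}

/-- Sample space: each of the `n` nodes independently picks a uniformly random
size-`k` subset of coordinates. -/
abbrev Omega (n d k : ℕ) := Fin n → KSub d k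

/-- Expectation with respect to the uniform distribution on `Omega n d k`
(each `n`-tuple of `k`-subsets has probability `1 / C(d,k)^n`). -/
def Exp {n d k : ℕ} (f : Omega n d k → ℝ) : ℝ :=
  (∑ ω : Omega n d k, f ω) / (Fintype.card (Omega n d k) : ℝ)

/-- The sparsified vector of node `i`: `h_{ij} = x_{ij}` if `j ∈ S_i`, else `0`. -/
def spars {n d k : ℕ} (x : Fin n → Fin d → ℝ) (ω : Omega n d k) (i : Fin n) (j : Fin d) : ℝ :=
  if j ∈ (ω i).1 then x i j else 0

/-- The per-coordinate sampling probability `p = k/d`. -/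
def pr (d k : ℕ) : ℝ := (k : ℝ) / (d : ℝ)

/-- `M_j`: the number of nodes that send coordinate `j`. -/
def Mcount {n d k : ℕ} (ω : Omega n d k) (j : Fin d) : ℕ :=
  (Finset.univ.filter fun i : Fin n => j ∈ (ω i).1).card

/-- The normalizing constant
`β̄ = ( Σ_{m=1}^n (p/T(m))·C(n−1,m−1)·p^{m−1}·(1−p)^{n−m} )⁻¹`. -/
def betaBar (n d k : ℕ) (T : ℕ → ℝ) : ℝ :=
  (∑ m ∈ Finset.Icc 1 n,
      (pr d k / T m) * ((n - 1).choose (m - 1) : ℝ) * pr d k ^ (m - 1)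
        * (1 - pr d k) ^ (n - m))⁻¹

/-- The Rand-k-Spatial estimate of coordinate `j` of the mean:
`x̂_j = (1/n)·(β̄/T(M_j))·Σᵢ h_{ij}` when `M_j ≥ 1`, and `x̂_j = 0` when `M_j = 0`. -/
def spatialEst {n d k : ℕ} (x : Fin n → Fin d → ℝ) (T : ℕ → ℝ) (ω : Omega n d k)
    (j : Fin d) : ℝ :=
  if 1 ≤ Mcount ω j then
    (1 / (n : ℝ)) * (betaBar n d k T / T (Mcount ω j)) * ∑ i : Fin n, spars x ω i j
  else 0

/-- The mean squared error `E[‖x̂ᵀ − x̄‖²]` of the Rand-k-Spatial estimator with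
scaling function `T`. -/
def mseSpatial (n d k : ℕ) (x : Fin n → Fin d → ℝ) (T : ℕ → ℝ) : ℝ :=
  Exp (fun ω : Omega n d k =>
    ∑ j : Fin d, (spatialEst x T ω j - (1 / (n : ℝ)) * ∑ i : Fin n, x i j) ^ 2)


lemma sum_powerset_filter_mem {α : Type*} [DecidableEq α] (s : Finset α) (a : α) (ha : a ∈ s)
    (f : Finset α → ℝ) :
    ∑ F ∈ s.powerset, (if a ∈ F then f F else 0)
      = ∑ F ∈ (s.erase a).powerset, f (insert a F) := by
  rw [← Finset.sum_filter]
  refine Finset.sum_bij' (fun F _ => F.erase a) (fun F _ => insert a F) ?_ ?_ ?_ ?_ ?_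
  · intro F hF
    simp only [mem_filter, mem_powerset] at hF
    simp only [mem_powerset]
    exact erase_subset_erase a hF.1
  · intro F hF
    simp only [mem_powerset] at hF
    simp only [mem_filter, mem_powerset, mem_insert, true_or, and_true]
    exact insert_subset ha (hF.trans (erase_subset a s))
  · intro F hF
    simp only [mem_filter] at hF
    exact insert_erase hF.2
  · intro F hF
    simp only [mem_powerset] at hF
    exact erase_insert (fun h => (mem_erase.1 (hF h)).1 rfl)
  · intro F hF
    simp only [mem_filter] at hF
    rw [insert_erase hF.2]

lemma sum_Icc_shift (a n : ℕ) (f : ℕ → ℝ) :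
    ∑ m ∈ Finset.Icc a n, f m = ∑ r ∈ Finset.range (n + 1 - a), f (r + a) := by
  refine Finset.sum_bij' (fun m _ => m - a) (fun r _ => r + a) ?_ ?_ ?_ ?_ ?_
  · intro m hm; simp only [mem_Icc] at hm; simp only [mem_range]; omega
  · intro r hr; simp only [mem_range] at hr; simp only [mem_Icc]; omega
  · intro m hm; simp only [mem_Icc] at hm; omega
  · intro r hr; simp only [mem_range] at hr; omega
  · intro m hm; simp only [mem_Icc] at hm
    congr 1; omega

lemma binom_sum (p : ℝ) (N : ℕ) :
    ∑ m ∈ Finset.range (N + 1), (N.choose m : ℝ) * p ^ m * (1 - p) ^ (N - m) = 1 := by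
  have h := add_pow p (1 - p) N
  simp only [add_sub_cancel, one_pow] at h
  calc ∑ m ∈ Finset.range (N + 1), (N.choose m : ℝ) * p ^ m * (1 - p) ^ (N - m)
      = ∑ m ∈ Finset.range (N + 1), p ^ m * (1 - p) ^ (N - m) * (N.choose m : ℝ) :=
        Finset.sum_congr rfl fun m _ => by ring
    _ = 1 := h.symm

lemma E_zero (n : ℕ) (p : ℝ) :
    ∑ F : Finset (Fin n), p ^ F.card * (1 - p) ^ (n - F.card) = 1 := by
  rw [← Finset.powerset_univ,
    Finset.sum_powerset_apply_card (fun c => p ^ c * (1 - p) ^ (n - c))]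
  rw [Finset.card_univ, Fintype.card_fin]
  calc ∑ m ∈ Finset.range (n + 1), (n.choose m) • (p ^ m * (1 - p) ^ (n - m))
      = ∑ m ∈ Finset.range (n + 1), (n.choose m : ℝ) * p ^ m * (1 - p) ^ (n - m) :=
        Finset.sum_congr rfl fun m _ => by rw [nsmul_eq_mul]; ring
    _ = 1 := binom_sum p n

lemma E_one {n : ℕ} (i : Fin n) (H : ℕ → ℝ) (p : ℝ) :
    ∑ F : Finset (Fin n),
        (if i ∈ F then p ^ F.card * (1 - p) ^ (n - F.card) * H F.card else 0)
      = ∑ m ∈ Finset.Icc 1 n,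
          (((n - 1).choose (m - 1) : ℕ) : ℝ) * p ^ m * (1 - p) ^ (n - m) * H m := by
  have hn : 1 ≤ n := i.pos
  rw [← Finset.powerset_univ,
    sum_powerset_filter_mem _ i (mem_univ i)
      (fun F => p ^ F.card * (1 - p) ^ (n - F.card) * H F.card)]
  have hcard : ∀ F ∈ (univ.erase i).powerset, (insert i F).card = F.card + 1 := by
    intro F hF
    rw [Finset.card_insert_of_notMem]
    intro hiF
    exact (Finset.mem_erase.1 (Finset.mem_powerset.1 hF hiF)).1 rfl
  rw [Finset.sum_congr rfl (fun F hF => by rw [hcard F hF])]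
  rw [Finset.sum_powerset_apply_card
    (fun c => p ^ (c + 1) * (1 - p) ^ (n - (c + 1)) * H (c + 1))]
  rw [Finset.card_erase_of_mem (mem_univ i), Finset.card_univ, Fintype.card_fin]
  rw [sum_Icc_shift 1 n]
  have hr : n - 1 + 1 = n + 1 - 1 := by omega
  rw [hr]
  refine Finset.sum_congr rfl fun r _ => ?_
  rw [nsmul_eq_mul]
  have h1 : r + 1 - 1 = r := by omega
  rw [h1]
  ring

lemma E_two {n : ℕ} (i l : Fin n) (hil : i ≠ l) (H : ℕ → ℝ) (p : ℝ) :
    ∑ F : Finset (Fin n),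
        (if i ∈ F ∧ l ∈ F then p ^ F.card * (1 - p) ^ (n - F.card) * H F.card else 0)
      = ∑ m ∈ Finset.Icc 2 n,
          (((n - 2).choose (m - 2) : ℕ) : ℝ) * p ^ m * (1 - p) ^ (n - m) * H m := by
  have hvn : (i : ℕ) ≠ (l : ℕ) := fun h => hil (Fin.ext h)
  have hn2 : 2 ≤ n := by have := i.isLt; have := l.isLt; omega
  simp only [ite_and]
  rw [← Finset.powerset_univ,
    sum_powerset_filter_mem _ i (mem_univ i)
      (fun F => if l ∈ F then p ^ F.card * (1 - p) ^ (n - F.card) * H F.card else 0)]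
  have hmem : ∀ F : Finset (Fin n), (l ∈ insert i F) = (l ∈ F) := by
    intro F; simp [Finset.mem_insert, hil.symm]
  simp only [hmem]
  rw [sum_powerset_filter_mem _ l
      (Finset.mem_erase.2 ⟨hil.symm, mem_univ l⟩)
      (fun F => p ^ (insert i F).card * (1 - p) ^ (n - (insert i F).card)
        * H (insert i F).card)]
  have hcard : ∀ F ∈ ((univ.erase i).erase l).powerset,
      (insert i (insert l F)).card = F.card + 2 := by
    intro F hF
    have hsub := Finset.mem_powerset.1 hF
    have hlF : l ∉ F := fun h => (Finset.mem_erase.1 (hsub h)).1 rfl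
    have hiF : i ∉ F := fun h => (Finset.mem_erase.1 (Finset.mem_erase.1 (hsub h)).2).1 rfl
    rw [Finset.card_insert_of_notMem (by simp [Finset.mem_insert, hil, hiF]),
      Finset.card_insert_of_notMem hlF]
  rw [Finset.sum_congr rfl (fun F hF => by rw [hcard F hF])]
  rw [Finset.sum_powerset_apply_card
    (fun c => p ^ (c + 2) * (1 - p) ^ (n - (c + 2)) * H (c + 2))]
  rw [Finset.card_erase_of_mem (Finset.mem_erase.2 ⟨hil.symm, mem_univ l⟩),
    Finset.card_erase_of_mem (mem_univ i), Finset.card_univ, Fintype.card_fin]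
  rw [sum_Icc_shift 2 n]
  have hr : n - 1 - 1 + 1 = n + 1 - 2 := by omega
  rw [hr]
  refine Finset.sum_congr rfl fun r _ => ?_
  rw [nsmul_eq_mul]
  have h1 : r + 2 - 2 = r := by omega
  have h2 : n - 1 - 1 = n - 2 := by omega
  rw [h1, h2]
  ring

lemma V_one {n : ℕ} (hn : 1 ≤ n) (p : ℝ) :
    ∑ m ∈ Finset.Icc 1 n, (((n - 1).choose (m - 1) : ℕ) : ℝ) * p ^ m * (1 - p) ^ (n - m)
      = p := by
  rw [sum_Icc_shift 1 n]
  have h : n + 1 - 1 = (n - 1) + 1 := by omega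
  rw [h]
  calc ∑ r ∈ Finset.range (n - 1 + 1),
        (((n - 1).choose (r + 1 - 1) : ℕ) : ℝ) * p ^ (r + 1) * (1 - p) ^ (n - (r + 1))
      = p * ∑ r ∈ Finset.range (n - 1 + 1),
          ((n - 1).choose r : ℝ) * p ^ r * (1 - p) ^ (n - 1 - r) := by
        rw [Finset.mul_sum]
        refine Finset.sum_congr rfl fun r _ => ?_
        have h1 : r + 1 - 1 = r := by omega
        have h2 : n - (r + 1) = n - 1 - r := by omega
        rw [h1, h2, pow_succ]
        ring
    _ = p := by rw [binom_sum, mul_one]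

lemma V_two {n : ℕ} (hn : 2 ≤ n) (p : ℝ) :
    ∑ m ∈ Finset.Icc 2 n, (((n - 2).choose (m - 2) : ℕ) : ℝ) * p ^ m * (1 - p) ^ (n - m)
      = p ^ 2 := by
  rw [sum_Icc_shift 2 n]
  have h : n + 1 - 2 = (n - 2) + 1 := by omega
  rw [h]
  calc ∑ r ∈ Finset.range (n - 2 + 1),
        (((n - 2).choose (r + 2 - 2) : ℕ) : ℝ) * p ^ (r + 2) * (1 - p) ^ (n - (r + 2))
      = p ^ 2 * ∑ r ∈ Finset.range (n - 2 + 1),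
          ((n - 2).choose r : ℝ) * p ^ r * (1 - p) ^ (n - 2 - r) := by
        rw [Finset.mul_sum]
        refine Finset.sum_congr rfl fun r _ => ?_
        have h1 : r + 2 - 2 = r := by omega
        have h2 : n - (r + 2) = n - 2 - r := by omega
        rw [h1, h2]
        ring
    _ = p ^ 2 := by rw [binom_sum, mul_one]

lemma A_expand {n : ℕ} (w : Finset (Fin n) → ℝ) (y : Fin n → ℝ) :
    ∑ F : Finset (Fin n), w F * (∑ i ∈ F, y i) ^ 2
      = ∑ i : Fin n, ∑ l : Fin n,
          (∑ F : Finset (Fin n), if i ∈ F ∧ l ∈ F then w F else 0) * (y i * y l) := by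
  have h1 : ∀ F : Finset (Fin n), w F * (∑ i ∈ F, y i) ^ 2
      = ∑ i : Fin n, ∑ l : Fin n, (if i ∈ F ∧ l ∈ F then w F else 0) * (y i * y l) := by
    intro F
    have key : (∑ i ∈ F, y i) = ∑ i : Fin n, (if i ∈ F then y i else 0) := by
      rw [Finset.sum_ite_mem, univ_inter]
    rw [key, sq, Finset.sum_mul_sum]
    simp only [Finset.mul_sum]
    refine Finset.sum_congr rfl fun i _ => Finset.sum_congr rfl fun l _ => ?_
    by_cases hi : i ∈ F <;> by_cases hl : l ∈ F <;> simp [hi, hl] <;> ring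
  calc ∑ F : Finset (Fin n), w F * (∑ i ∈ F, y i) ^ 2
      = ∑ F : Finset (Fin n), ∑ i : Fin n, ∑ l : Fin n,
          (if i ∈ F ∧ l ∈ F then w F else 0) * (y i * y l) :=
        Finset.sum_congr rfl fun F _ => h1 F
    _ = ∑ i : Fin n, ∑ F : Finset (Fin n), ∑ l : Fin n,
          (if i ∈ F ∧ l ∈ F then w F else 0) * (y i * y l) := Finset.sum_comm
    _ = ∑ i : Fin n, ∑ l : Fin n, ∑ F : Finset (Fin n),
          (if i ∈ F ∧ l ∈ F then w F else 0) * (y i * y l) :=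
        Finset.sum_congr rfl fun i _ => Finset.sum_comm
    _ = ∑ i : Fin n, ∑ l : Fin n,
          (∑ F : Finset (Fin n), if i ∈ F ∧ l ∈ F then w F else 0) * (y i * y l) :=
        Finset.sum_congr rfl fun i _ => Finset.sum_congr rfl fun l _ =>
          (Finset.sum_mul _ _ _).symm

lemma B_expand {n : ℕ} (w : Finset (Fin n) → ℝ) (y : Fin n → ℝ) :
    ∑ F : Finset (Fin n), w F * (∑ i ∈ F, y i)
      = ∑ i : Fin n, (∑ F : Finset (Fin n), if i ∈ F then w F else 0) * y i := by
  have h1 : ∀ F : Finset (Fin n), w F * (∑ i ∈ F, y i)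
      = ∑ i : Fin n, (if i ∈ F then w F else 0) * y i := by
    intro F
    have key : (∑ i ∈ F, y i) = ∑ i : Fin n, (if i ∈ F then y i else 0) := by
      rw [Finset.sum_ite_mem, univ_inter]
    rw [key, Finset.mul_sum]
    refine Finset.sum_congr rfl fun i _ => ?_
    by_cases hi : i ∈ F <;> simp [hi]
  calc ∑ F : Finset (Fin n), w F * (∑ i ∈ F, y i)
      = ∑ F : Finset (Fin n), ∑ i : Fin n, (if i ∈ F then w F else 0) * y i :=
        Finset.sum_congr rfl fun F _ => h1 F
    _ = ∑ i : Fin n, ∑ F : Finset (Fin n), (if i ∈ F then w F else 0) * y i :=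
        Finset.sum_comm
    _ = ∑ i : Fin n, (∑ F : Finset (Fin n), if i ∈ F then w F else 0) * y i :=
        Finset.sum_congr rfl fun i _ => (Finset.sum_mul _ _ _).symm



section Counting

variable {n d k : ℕ}

lemma card_KSub (d k : ℕ) : Fintype.card (KSub d k) = d.choose k := by
  rw [Fintype.card_subtype]
  have h : (univ.filter fun S : Finset (Fin d) => S.card = k)
      = (univ : Finset (Fin d)).powersetCard k := by
    ext S; simp [Finset.mem_powersetCard]
  rw [h, Finset.card_powersetCard, Finset.card_univ, Fintype.card_fin]

lemma card_KSub_mem (hk : 1 ≤ k) (j : Fin d) :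
    Fintype.card {S : KSub d k // j ∈ S.1} = (d - 1).choose (k - 1) := by
  have h0 : Fintype.card {S : KSub d k // j ∈ S.1}
      = Fintype.card {S : Finset (Fin d) // S.card = k ∧ j ∈ S} :=
    Fintype.card_congr (Equiv.subtypeSubtypeEquivSubtypeInter (fun S : Finset (Fin d) => S.card = k) (fun S => j ∈ S))
  rw [h0, Fintype.card_subtype]
  have h : (univ.filter fun S : Finset (Fin d) => S.card = k ∧ j ∈ S)
      = (((univ : Finset (Fin d)).erase j).powersetCard (k - 1)).image (insert j) := by
    ext S
    simp only [mem_filter, mem_univ, true_and, Finset.mem_image, Finset.mem_powersetCard]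
    constructor
    · rintro ⟨hcard, hj⟩
      refine ⟨S.erase j, ⟨erase_subset_erase _ (subset_univ S), ?_⟩, insert_erase hj⟩
      rw [card_erase_of_mem hj, hcard]
    · rintro ⟨t, ⟨hsub, hcard⟩, rfl⟩
      have hjt : j ∉ t := fun h => (mem_erase.1 (hsub h)).1 rfl
      refine ⟨?_, mem_insert_self _ _⟩
      rw [card_insert_of_notMem hjt, hcard]
      omega
  rw [h, Finset.card_image_of_injOn, Finset.card_powersetCard,
    card_erase_of_mem (mem_univ j), Finset.card_univ, Fintype.card_fin]
  intro s hs t ht hst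
  simp only [Finset.mem_coe, Finset.mem_powersetCard] at hs ht
  have hjs : j ∉ s := fun h => (mem_erase.1 (hs.1 h)).1 rfl
  have hjt : j ∉ t := fun h => (mem_erase.1 (ht.1 h)).1 rfl
  rw [← Finset.erase_insert hjs, ← Finset.erase_insert hjt, hst]

lemma fiber_card (n : ℕ) (j : Fin d) (F : Finset (Fin n)) :
    (univ.filter fun ω : Omega n d k =>
        (univ.filter fun i : Fin n => j ∈ (ω i).1) = F).card
      = (Fintype.card {S : KSub d k // j ∈ S.1}) ^ F.card
        * (Fintype.card (KSub d k) - Fintype.card {S : KSub d k // j ∈ S.1})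
            ^ (n - F.card) := by
  rw [← Fintype.card_subtype]
  have e1 : {ω : Omega n d k // (univ.filter fun i : Fin n => j ∈ (ω i).1) = F}
      ≃ ∀ i : Fin n, {S : KSub d k // (j ∈ S.1) ↔ (i ∈ F)} := by
    refine (Equiv.subtypeEquivRight ?_).trans Equiv.subtypePiEquivPi
    intro ω
    constructor
    · intro h i
      rw [← h]; simp
    · intro h
      ext i; simp only [mem_filter, mem_univ, true_and]
      exact h i
  rw [Fintype.card_congr e1, Fintype.card_pi]
  have e2 : ∀ i : Fin n, Fintype.card {S : KSub d k // (j ∈ S.1) ↔ (i ∈ F)}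
      = if i ∈ F then Fintype.card {S : KSub d k // j ∈ S.1}
        else Fintype.card (KSub d k) - Fintype.card {S : KSub d k // j ∈ S.1} := by
    intro i
    by_cases hi : i ∈ F
    · rw [if_pos hi]
      exact Fintype.card_congr (Equiv.subtypeEquivRight fun S => by simp [hi])
    · rw [if_neg hi, ← Fintype.card_subtype_compl]
      exact Fintype.card_congr (Equiv.subtypeEquivRight fun S => by simp [hi])
  rw [Finset.prod_congr rfl fun i _ => e2 i, Finset.prod_ite _ _, Finset.prod_const,
    Finset.prod_const, Finset.filter_univ_mem]
  congr 2
  have := Finset.card_filter_add_card_filter_not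
    (s := (univ : Finset (Fin n))) (p := fun i => i ∈ F)
  rw [Finset.filter_univ_mem] at this
  rw [Finset.card_univ, Fintype.card_fin] at this
  omega

lemma push_sum (n : ℕ) (j : Fin d) (Φ : Finset (Fin n) → ℝ) :
    ∑ ω : Omega n d k, Φ (univ.filter fun i : Fin n => j ∈ (ω i).1)
      = ∑ F : Finset (Fin n),
          (((Fintype.card {S : KSub d k // j ∈ S.1}) ^ F.card
            * (Fintype.card (KSub d k) - Fintype.card {S : KSub d k // j ∈ S.1})
                ^ (n - F.card) : ℕ) : ℝ) * Φ F := by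
  rw [← Finset.sum_fiberwise univ (fun ω : Omega n d k =>
    univ.filter fun i : Fin n => j ∈ (ω i).1)
    (fun ω => Φ (univ.filter fun i : Fin n => j ∈ (ω i).1))]
  refine Finset.sum_congr rfl fun F _ => ?_
  have hconst : ∀ ω ∈ univ.filter (fun ω : Omega n d k =>
      (univ.filter fun i : Fin n => j ∈ (ω i).1) = F),
      Φ (univ.filter fun i : Fin n => j ∈ (ω i).1) = Φ F := fun ω hω => by
    rw [(Finset.mem_filter.1 hω).2]
  rw [Finset.sum_congr rfl hconst, Finset.sum_const, nsmul_eq_mul, fiber_card n j F]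

end Counting


section Weights

lemma weight_generic (A N : ℕ) (hAN : A ≤ N) (hN : 0 < N) (p : ℝ)
    (hA : (A : ℝ) = p * N) (c n : ℕ) (hc : c ≤ n) :
    ((A ^ c * (N - A) ^ (n - c) : ℕ) : ℝ) / (N : ℝ) ^ n
      = p ^ c * (1 - p) ^ (n - c) := by
  have hNR : (0:ℝ) < (N:ℝ) := by exact_mod_cast hN
  rw [Nat.cast_mul, Nat.cast_pow, Nat.cast_pow, Nat.cast_sub hAN, hA]
  have h1 : (N:ℝ) - p * N = (1 - p) * N := by ring
  rw [h1]
  have h2 : (p * (N:ℝ)) ^ c * ((1 - p) * (N:ℝ)) ^ (n - c)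
      = (p ^ c * (1 - p) ^ (n - c)) * ((N:ℝ) ^ c * (N:ℝ) ^ (n - c)) := by
    rw [mul_pow, mul_pow]; ring
  have h3 : (N:ℝ) ^ c * (N:ℝ) ^ (n - c) = (N:ℝ) ^ n := by
    rw [← pow_add]; congr 1; omega
  rw [h2, h3, mul_div_assoc, div_self (by positivity), mul_one]

variable {n d k : ℕ}

lemma pr_pos (hk : 1 ≤ k) (hkd : k ≤ d) : 0 < pr d k := by
  have hd : 0 < d := lt_of_lt_of_le hk hkd
  unfold pr
  exact div_pos (by exact_mod_cast hk) (by exact_mod_cast hd)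

lemma A_real (hk : 1 ≤ k) (hkd : k ≤ d) (j : Fin d) :
    (Fintype.card {S : KSub d k // j ∈ S.1} : ℝ)
      = pr d k * (Fintype.card (KSub d k) : ℝ) := by
  have hd : 1 ≤ d := le_trans hk hkd
  rw [card_KSub_mem hk j, card_KSub]
  have hnat : d * (d - 1).choose (k - 1) = d.choose k * k := by
    have h := Nat.add_one_mul_choose_eq (d - 1) (k - 1)
    have h1 : d - 1 + 1 = d := by omega
    have h2 : k - 1 + 1 = k := by omega
    rw [h1, h2] at h
    exact h
  have hdR : ((d:ℝ)) ≠ 0 := by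
    have : (0:ℝ) < d := by exact_mod_cast lt_of_lt_of_le (by omega : 0 < 1) hd
    linarith
  have hcast : (d:ℝ) * ((d-1).choose (k-1) : ℝ) = (d.choose k : ℝ) * k := by
    exact_mod_cast hnat
  rw [pr, div_mul_eq_mul_div, eq_div_iff hdR]
  linarith

lemma card_Omega (n d k : ℕ) :
    Fintype.card (Omega n d k) = (Fintype.card (KSub d k)) ^ n := by
  rw [Fintype.card_fun, Fintype.card_fin]

lemma exp_eq (hk : 1 ≤ k) (hkd : k ≤ d) (Φ : Fin d → Finset (Fin n) → ℝ) :
    Exp (fun ω : Omega n d k =>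
        ∑ j : Fin d, Φ j (univ.filter fun i : Fin n => j ∈ (ω i).1))
      = ∑ j : Fin d, ∑ F : Finset (Fin n),
          (pr d k ^ F.card * (1 - pr d k) ^ (n - F.card)) * Φ j F := by
  rw [Exp, Finset.sum_comm, Finset.sum_div]
  refine Finset.sum_congr rfl fun j _ => ?_
  rw [push_sum n j (Φ j), Finset.sum_div]
  refine Finset.sum_congr rfl fun F _ => ?_
  have hAN : Fintype.card {S : KSub d k // j ∈ S.1} ≤ Fintype.card (KSub d k) :=
    Fintype.card_subtype_le _
  have hNpos : 0 < Fintype.card (KSub d k) := by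
    rw [card_KSub]; exact Nat.choose_pos hkd
  have hc : F.card ≤ n := by simpa using Finset.card_le_univ F
  rw [card_Omega, mul_div_right_comm, Nat.cast_pow]
  congr 1
  exact weight_generic _ _ hAN hNpos (pr d k) (A_real hk hkd j) F.card n hc

end Weights


section PerCoordinate

lemma diag_offdiag {n : ℕ} (y : Fin n → ℝ) (c1 c2 : ℝ) :
    ∑ i : Fin n, ∑ l : Fin n, (if i = l then c1 else -c2) * (y i * y l)
      = c1 * (∑ i : Fin n, (y i) ^ 2)
        - c2 * (2 * ∑ i : Fin n, ∑ l : Fin n, (if i < l then y i * y l else 0)) := by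
  have hterm : ∀ i l : Fin n, (if i = l then c1 else -c2) * (y i * y l)
      = c1 * (if i = l then y i * y l else 0)
        + (-c2) * ((if i < l then y i * y l else 0) + (if l < i then y i * y l else 0)) := by
    intro i l
    rcases lt_trichotomy i l with h | h | h
    · have h1 : i ≠ l := ne_of_lt h
      have h2 : ¬ l < i := not_lt_of_gt h
      simp only [if_neg h1, if_pos h, if_neg h2]
      ring
    · subst h
      simp [lt_irrefl]
    · have h1 : i ≠ l := (ne_of_lt h).symm
      have h2 : ¬ i < l := not_lt_of_gt h
      simp only [if_neg h1, if_neg h2, if_pos h]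
      ring
  rw [Finset.sum_congr rfl fun i _ => Finset.sum_congr rfl fun l _ => hterm i l]
  simp only [Finset.sum_add_distrib, ← Finset.mul_sum]
  have e1 : ∀ i : Fin n, ∑ l : Fin n, (if i = l then y i * y l else 0) = (y i) ^ 2 := by
    intro i
    rw [Finset.sum_ite_eq, if_pos (Finset.mem_univ i), sq]
  have e2 : ∑ i : Fin n, ∑ l : Fin n, (if l < i then y i * y l else 0)
      = ∑ i : Fin n, ∑ l : Fin n, (if i < l then y i * y l else 0) := by
    rw [Finset.sum_comm]
    exact Finset.sum_congr rfl fun i _ => Finset.sum_congr rfl fun l _ => by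
      rcases Classical.em (i < l) with h | h
      · rw [if_pos h, if_pos h, mul_comm]
      · rw [if_neg h, if_neg h]
  rw [Finset.sum_congr rfl fun i _ => e1 i, e2]
  ring

lemma perj {n : ℕ} (hn : 1 ≤ n) (y : Fin n → ℝ) (p q : ℝ) (hqp : q * p = 1)
    (G : ℕ → ℝ) (c1 c2 : ℝ)
    (hVG1 : ∑ m ∈ Finset.Icc 1 n,
        (((n - 1).choose (m - 1) : ℕ) : ℝ) * p ^ m * (1 - p) ^ (n - m) * G m = 1)
    (hVG1sq : ∑ m ∈ Finset.Icc 1 n,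
        (((n - 1).choose (m - 1) : ℕ) : ℝ) * p ^ m * (1 - p) ^ (n - m) * G m ^ 2 = c1 + q)
    (hVG2sq : ∑ m ∈ Finset.Icc 2 n,
        (((n - 2).choose (m - 2) : ℕ) : ℝ) * p ^ m * (1 - p) ^ (n - m) * G m ^ 2 = 1 - c2) :
    (∑ F : Finset (Fin n), (p ^ F.card * (1 - p) ^ (n - F.card)) *
        ((n : ℝ)⁻¹ * G F.card * (∑ i ∈ F, y i) - (n : ℝ)⁻¹ * ∑ i : Fin n, y i) ^ 2)
      - (∑ F : Finset (Fin n), (p ^ F.card * (1 - p) ^ (n - F.card)) *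
        ((n : ℝ)⁻¹ * q * (∑ i ∈ F, y i) - (n : ℝ)⁻¹ * ∑ i : Fin n, y i) ^ 2)
      = (n : ℝ)⁻¹ ^ 2 * (c1 * (∑ i : Fin n, (y i) ^ 2)
          - c2 * (2 * ∑ i : Fin n, ∑ l : Fin n, (if i < l then y i * y l else 0))) := by
  have hq2p : q ^ 2 * p = q := by
    have h : q ^ 2 * p = q * (q * p) := by ring
    rw [h, hqp, mul_one]
  have hq2p2 : q ^ 2 * p ^ 2 = 1 := by
    have h : q ^ 2 * p ^ 2 = (q * p) ^ 2 := by ring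
    rw [h, hqp, one_pow]
  have expand : ∀ g : ℕ → ℝ,
      ∑ F : Finset (Fin n), (p ^ F.card * (1 - p) ^ (n - F.card)) *
          ((n : ℝ)⁻¹ * g F.card * (∑ i ∈ F, y i) - (n : ℝ)⁻¹ * ∑ i : Fin n, y i) ^ 2
        = (n : ℝ)⁻¹ ^ 2 * ((∑ i : Fin n, ∑ l : Fin n,
              (∑ F : Finset (Fin n), if i ∈ F ∧ l ∈ F then
                  p ^ F.card * (1 - p) ^ (n - F.card) * g F.card ^ 2 else 0) * (y i * y l))
            - 2 * (∑ i : Fin n, y i) * (∑ i : Fin n,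
              (∑ F : Finset (Fin n), if i ∈ F then
                  p ^ F.card * (1 - p) ^ (n - F.card) * g F.card else 0) * y i)
            + (∑ i : Fin n, y i) ^ 2) := by
    intro g
    have h1 : ∀ F : Finset (Fin n),
        (p ^ F.card * (1 - p) ^ (n - F.card)) *
            ((n : ℝ)⁻¹ * g F.card * (∑ i ∈ F, y i) - (n : ℝ)⁻¹ * ∑ i : Fin n, y i) ^ 2
          = (n : ℝ)⁻¹ ^ 2 *
                ((p ^ F.card * (1 - p) ^ (n - F.card) * g F.card ^ 2) * (∑ i ∈ F, y i) ^ 2)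
            - (n : ℝ)⁻¹ ^ 2 * (2 * ∑ i : Fin n, y i) *
                ((p ^ F.card * (1 - p) ^ (n - F.card) * g F.card) * (∑ i ∈ F, y i))
            + (n : ℝ)⁻¹ ^ 2 * (∑ i : Fin n, y i) ^ 2 *
                (p ^ F.card * (1 - p) ^ (n - F.card)) := fun F => by ring
    rw [Finset.sum_congr rfl fun F _ => h1 F, Finset.sum_add_distrib,
      Finset.sum_sub_distrib, ← Finset.mul_sum, ← Finset.mul_sum, ← Finset.mul_sum,
      A_expand (fun F => p ^ F.card * (1 - p) ^ (n - F.card) * g F.card ^ 2) y,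
      B_expand (fun F => p ^ F.card * (1 - p) ^ (n - F.card) * g F.card) y,
      E_zero n p]
    ring
  have hexpG := expand G
  have hexpq := expand (fun _ => q)
  rw [hexpG, hexpq]
  have coefG2 : ∀ i l : Fin n,
      (∑ F : Finset (Fin n), if i ∈ F ∧ l ∈ F then
          p ^ F.card * (1 - p) ^ (n - F.card) * G F.card ^ 2 else 0)
        = if i = l then c1 + q else 1 - c2 := by
    intro i l
    by_cases hil : i = l
    · subst hil
      rw [if_pos rfl]
      have h := E_one i (fun m => G m ^ 2) p
      simp only [and_self] at h ⊢
      exact h.trans hVG1sq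
    · rw [if_neg hil]
      have h := E_two i l hil (fun m => G m ^ 2) p
      exact h.trans hVG2sq
  have coefG1 : ∀ i : Fin n,
      (∑ F : Finset (Fin n), if i ∈ F then
          p ^ F.card * (1 - p) ^ (n - F.card) * G F.card else 0) = 1 := by
    intro i
    have h := E_one i G p
    exact h.trans hVG1
  have coefq2 : ∀ i l : Fin n,
      (∑ F : Finset (Fin n), if i ∈ F ∧ l ∈ F then
          p ^ F.card * (1 - p) ^ (n - F.card) * q ^ 2 else 0)
        = if i = l then q else 1 := by
    intro i l
    by_cases hil : i = l
    · subst hil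
      rw [if_pos rfl]
      have h := E_one i (fun _ => q ^ 2) p
      simp only [and_self] at h ⊢
      rw [h]
      have h2 : ∑ m ∈ Finset.Icc 1 n,
          (((n - 1).choose (m - 1) : ℕ) : ℝ) * p ^ m * (1 - p) ^ (n - m) * q ^ 2
          = (∑ m ∈ Finset.Icc 1 n,
              (((n - 1).choose (m - 1) : ℕ) : ℝ) * p ^ m * (1 - p) ^ (n - m)) * q ^ 2 :=
        (Finset.sum_mul _ _ _).symm
      rw [h2, V_one hn p, mul_comm]
      exact hq2p
    · rw [if_neg hil]
      have hn2 : 2 ≤ n := by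
        have h1 := i.isLt
        have h2 := l.isLt
        have h3 : (i : ℕ) ≠ (l : ℕ) := fun h => hil (Fin.ext h)
        omega
      have h := E_two i l hil (fun _ => q ^ 2) p
      rw [h]
      have h2 : ∑ m ∈ Finset.Icc 2 n,
          (((n - 2).choose (m - 2) : ℕ) : ℝ) * p ^ m * (1 - p) ^ (n - m) * q ^ 2
          = (∑ m ∈ Finset.Icc 2 n,
              (((n - 2).choose (m - 2) : ℕ) : ℝ) * p ^ m * (1 - p) ^ (n - m)) * q ^ 2 :=
        (Finset.sum_mul _ _ _).symm
      rw [h2, V_two hn2 p, mul_comm]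
      exact hq2p2
  have coefq1 : ∀ i : Fin n,
      (∑ F : Finset (Fin n), if i ∈ F then
          p ^ F.card * (1 - p) ^ (n - F.card) * q else 0) = 1 := by
    intro i
    have h := E_one i (fun _ => q) p
    rw [h]
    have h2 : ∑ m ∈ Finset.Icc 1 n,
        (((n - 1).choose (m - 1) : ℕ) : ℝ) * p ^ m * (1 - p) ^ (n - m) * q
        = (∑ m ∈ Finset.Icc 1 n,
            (((n - 1).choose (m - 1) : ℕ) : ℝ) * p ^ m * (1 - p) ^ (n - m)) * q :=
      (Finset.sum_mul _ _ _).symm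
    rw [h2, V_one hn p, mul_comm]
    exact hqp
  have rwG2 : (∑ i : Fin n, ∑ l : Fin n,
      (∑ F : Finset (Fin n), if i ∈ F ∧ l ∈ F then
          p ^ F.card * (1 - p) ^ (n - F.card) * G F.card ^ 2 else 0) * (y i * y l))
      = ∑ i : Fin n, ∑ l : Fin n, (if i = l then c1 + q else 1 - c2) * (y i * y l) :=
    Finset.sum_congr rfl fun i _ => Finset.sum_congr rfl fun l _ => by rw [coefG2 i l]
  have rwG1 : (∑ i : Fin n,
      (∑ F : Finset (Fin n), if i ∈ F then
          p ^ F.card * (1 - p) ^ (n - F.card) * G F.card else 0) * y i)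
      = ∑ i : Fin n, (1 : ℝ) * y i :=
    Finset.sum_congr rfl fun i _ => by rw [coefG1 i]
  have rwq2 : (∑ i : Fin n, ∑ l : Fin n,
      (∑ F : Finset (Fin n), if i ∈ F ∧ l ∈ F then
          p ^ F.card * (1 - p) ^ (n - F.card) * q ^ 2 else 0) * (y i * y l))
      = ∑ i : Fin n, ∑ l : Fin n, (if i = l then q else 1) * (y i * y l) :=
    Finset.sum_congr rfl fun i _ => Finset.sum_congr rfl fun l _ => by rw [coefq2 i l]
  have rwq1 : (∑ i : Fin n,
      (∑ F : Finset (Fin n), if i ∈ F then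
          p ^ F.card * (1 - p) ^ (n - F.card) * q else 0) * y i)
      = ∑ i : Fin n, (1 : ℝ) * y i :=
    Finset.sum_congr rfl fun i _ => by rw [coefq1 i]
  rw [rwG2, rwG1, rwq2, rwq1]
  have hS12 : (∑ i : Fin n, ∑ l : Fin n, (if i = l then c1 + q else 1 - c2) * (y i * y l))
      - (∑ i : Fin n, ∑ l : Fin n, (if i = l then q else 1) * (y i * y l))
      = ∑ i : Fin n, ∑ l : Fin n, (if i = l then c1 else -c2) * (y i * y l) := by
    rw [← Finset.sum_sub_distrib]
    refine Finset.sum_congr rfl fun i _ => ?_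
    rw [← Finset.sum_sub_distrib]
    refine Finset.sum_congr rfl fun l _ => ?_
    by_cases hil : i = l
    · rw [if_pos hil, if_pos hil, if_pos hil]; ring
    · rw [if_neg hil, if_neg hil, if_neg hil]; ring
  have hfin := diag_offdiag y c1 c2
  linear_combination ((n : ℝ)⁻¹ ^ 2) * hS12 + ((n : ℝ)⁻¹ ^ 2) * hfin

end PerCoordinate

/-- strict improvement over Rand-k when `c₁R₁ < c₂R₂`:
if the data and the scaling function `T` satisfy `c₁·R₁ < c₂·R₂`, then the
corresponding member of the Rand-k-Spatial family has strictly smaller MSE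
than the standard Rand-k estimator `x̂ = (1/n)(d/k) Σᵢ hᵢ`. -/
theorem spatial_beats_randk (n d k : ℕ) (hn : 1 ≤ n) (hk : 1 ≤ k) (hkd : k ≤ d)
    (x : Fin n → Fin d → ℝ) (T : ℕ → ℝ) (hT : ∀ m ∈ Finset.Icc 1 n, 0 < T m)
    (R1 R2 c1 c2 : ℝ)
    (hR1 : R1 = ∑ i : Fin n, ∑ j : Fin d, x i j ^ 2)
    (hR2 : R2 = 2 * ∑ i : Fin n, ∑ l : Fin n,
        if i < l then ∑ j : Fin d, x i j * x l j else 0)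
    (hc1 : c1 = betaBar n d k T ^ 2 * (∑ m ∈ Finset.Icc 1 n,
        (pr d k / T m ^ 2) * ((n - 1).choose (m - 1) : ℝ) * pr d k ^ (m - 1)
          * (1 - pr d k) ^ (n - m)) - 1 / pr d k)
    (hc2 : c2 = 1 - betaBar n d k T ^ 2 * ∑ m ∈ Finset.Icc 2 n,
        (pr d k ^ 2 / T m ^ 2) * ((n - 2).choose (m - 2) : ℝ) * pr d k ^ (m - 2)
          * (1 - pr d k) ^ (n - m))
    (hlt : c1 * R1 < c2 * R2) :
    mseSpatial n d k x T
      < Exp (fun ω : Omega n d k =>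
          ∑ j : Fin d,
            ((1 / (n : ℝ)) * ((d : ℝ) / (k : ℝ)) * ∑ i : Fin n, spars x ω i j
              - (1 / (n : ℝ)) * ∑ i : Fin n, x i j) ^ 2) := by
  have hd : 1 ≤ d := le_trans hk hkd
  have hnR : (0:ℝ) < (n:ℝ) := by exact_mod_cast hn
  set p := pr d k with hp
  set β := betaBar n d k T with hβ
  set q : ℝ := (d : ℝ) / (k : ℝ) with hqdef
  have hppos : 0 < p := pr_pos hk hkd
  have hple : p ≤ 1 := by
    rw [hp, pr]
    apply div_le_one_of_le₀
    · exact_mod_cast hkd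
    · positivity
  have hq : q * p = 1 := by
    have hk0 : ((k:ℝ)) ≠ 0 := by
      have : (0:ℝ) < (k:ℝ) := by exact_mod_cast hk
      linarith
    have hd0 : ((d:ℝ)) ≠ 0 := by
      have : (0:ℝ) < (d:ℝ) := by exact_mod_cast hd
      linarith
    rw [hqdef, hp, pr]
    field_simp
  have h1p : 1 / p = q := by
    rw [hp, pr, one_div_div]
  -- positivity of the betaBar denominator
  have hBpos : 0 < ∑ m ∈ Finset.Icc 1 n,
      (p / T m) * ((n - 1).choose (m - 1) : ℝ) * p ^ (m - 1) * (1 - p) ^ (n - m) := by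
    refine Finset.sum_pos' ?_ ⟨n, Finset.mem_Icc.2 ⟨hn, le_refl n⟩, ?_⟩
    · intro m hm
      have hTm := hT m hm
      have h1 : 0 ≤ p / T m := le_of_lt (div_pos hppos hTm)
      have h2 : (0:ℝ) ≤ ((n - 1).choose (m - 1) : ℝ) := Nat.cast_nonneg _
      have h3 : (0:ℝ) ≤ p ^ (m - 1) := le_of_lt (pow_pos hppos _)
      have h4 : (0:ℝ) ≤ (1 - p) ^ (n - m) := pow_nonneg (by linarith) _
      exact mul_nonneg (mul_nonneg (mul_nonneg h1 h2) h3) h4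
    · have hTn := hT n (Finset.mem_Icc.2 ⟨hn, le_refl n⟩)
      rw [Nat.sub_self, pow_zero, mul_one, Nat.choose_self, Nat.cast_one, mul_one]
      exact mul_pos (div_pos hppos hTn) (pow_pos hppos _)
  have hβB : β * (∑ m ∈ Finset.Icc 1 n,
      (p / T m) * ((n - 1).choose (m - 1) : ℝ) * p ^ (m - 1) * (1 - p) ^ (n - m)) = 1 := by
    rw [hβ, betaBar, ← hp]
    exact inv_mul_cancel₀ (ne_of_gt hBpos)
  -- the three moment identities
  have hVG1 : ∑ m ∈ Finset.Icc 1 n,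
      (((n - 1).choose (m - 1) : ℕ) : ℝ) * p ^ m * (1 - p) ^ (n - m) * (β / T m) = 1 := by
    have hstep : ∑ m ∈ Finset.Icc 1 n,
        (((n - 1).choose (m - 1) : ℕ) : ℝ) * p ^ m * (1 - p) ^ (n - m) * (β / T m)
        = β * ∑ m ∈ Finset.Icc 1 n,
            (p / T m) * ((n - 1).choose (m - 1) : ℝ) * p ^ (m - 1) * (1 - p) ^ (n - m) := by
      rw [Finset.mul_sum]
      refine Finset.sum_congr rfl fun m hm => ?_
      have hm1 : 1 ≤ m := (Finset.mem_Icc.1 hm).1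
      have hTm : T m ≠ 0 := ne_of_gt (hT m hm)
      have hpm : p ^ m = p * p ^ (m - 1) := by
        rw [← pow_succ']
        congr 1
        omega
      rw [hpm]
      field_simp
    rw [hstep, hβB]
  have hVG1sq : ∑ m ∈ Finset.Icc 1 n,
      (((n - 1).choose (m - 1) : ℕ) : ℝ) * p ^ m * (1 - p) ^ (n - m) * (β / T m) ^ 2
      = c1 + q := by
    have hstep : ∑ m ∈ Finset.Icc 1 n,
        (((n - 1).choose (m - 1) : ℕ) : ℝ) * p ^ m * (1 - p) ^ (n - m) * (β / T m) ^ 2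
        = β ^ 2 * ∑ m ∈ Finset.Icc 1 n,
            (p / T m ^ 2) * ((n - 1).choose (m - 1) : ℝ) * p ^ (m - 1) * (1 - p) ^ (n - m) := by
      rw [Finset.mul_sum]
      refine Finset.sum_congr rfl fun m hm => ?_
      have hm1 : 1 ≤ m := (Finset.mem_Icc.1 hm).1
      have hTm : T m ≠ 0 := ne_of_gt (hT m hm)
      have hpm : p ^ m = p * p ^ (m - 1) := by
        rw [← pow_succ']
        congr 1
        omega
      rw [hpm, div_pow]
      field_simp
    rw [hstep, hc1, ← h1p]
    ring
  have hVG2sq : ∑ m ∈ Finset.Icc 2 n,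
      (((n - 2).choose (m - 2) : ℕ) : ℝ) * p ^ m * (1 - p) ^ (n - m) * (β / T m) ^ 2
      = 1 - c2 := by
    have hstep : ∑ m ∈ Finset.Icc 2 n,
        (((n - 2).choose (m - 2) : ℕ) : ℝ) * p ^ m * (1 - p) ^ (n - m) * (β / T m) ^ 2
        = β ^ 2 * ∑ m ∈ Finset.Icc 2 n,
            (p ^ 2 / T m ^ 2) * ((n - 2).choose (m - 2) : ℝ) * p ^ (m - 2) * (1 - p) ^ (n - m) := by
      rw [Finset.mul_sum]
      refine Finset.sum_congr rfl fun m hm => ?_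
      have hm2 : 2 ≤ m := (Finset.mem_Icc.1 hm).1
      have hmn : m ≤ n := (Finset.mem_Icc.1 hm).2
      have hTm : T m ≠ 0 := ne_of_gt (hT m (Finset.mem_Icc.2 ⟨by omega, hmn⟩))
      have hpm : p ^ m = p ^ 2 * p ^ (m - 2) := by
        rw [← pow_add]
        congr 1
        omega
      rw [hpm, div_pow]
      field_simp
    rw [hstep, hc2]
    ring
  -- rewrite the two MSEs as sums over coordinates and subsets
  have hest : ∀ (ω : Omega n d k) (j : Fin d), spatialEst x T ω j
      = (n : ℝ)⁻¹ * (β / T ((univ.filter fun i : Fin n => j ∈ (ω i).1).card))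
          * ∑ i ∈ univ.filter fun i : Fin n => j ∈ (ω i).1, x i j := by
    intro ω j
    have hsum : ∑ i : Fin n, spars x ω i j
        = ∑ i ∈ univ.filter fun i : Fin n => j ∈ (ω i).1, x i j := by
      rw [Finset.sum_filter]
      simp only [spars]
    by_cases hM : 1 ≤ Mcount ω j
    · rw [spatialEst, if_pos hM, hsum, one_div]
      rfl
    · rw [spatialEst, if_neg hM]
      have h0 : (univ.filter fun i : Fin n => j ∈ (ω i).1) = ∅ := by
        have hM0 : Mcount ω j = 0 := by omega
        rw [Mcount] at hM0
        exact Finset.card_eq_zero.1 hM0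
      rw [h0]
      simp
  have hspatial : mseSpatial n d k x T
      = ∑ j : Fin d, ∑ F : Finset (Fin n), (p ^ F.card * (1 - p) ^ (n - F.card)) *
          ((n : ℝ)⁻¹ * (β / T F.card) * (∑ i ∈ F, x i j)
            - (n : ℝ)⁻¹ * ∑ i : Fin n, x i j) ^ 2 := by
    have h := exp_eq (n := n) hk hkd (fun j F =>
      ((n : ℝ)⁻¹ * (β / T F.card) * (∑ i ∈ F, x i j)
        - (n : ℝ)⁻¹ * ∑ i : Fin n, x i j) ^ 2)
    rw [← hp] at h
    rw [mseSpatial, ← h]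
    congr 1
    funext ω
    refine Finset.sum_congr rfl fun j _ => ?_
    rw [hest ω j, one_div]
  have hrand : Exp (fun ω : Omega n d k =>
        ∑ j : Fin d, ((1 / (n : ℝ)) * ((d : ℝ) / (k : ℝ)) * ∑ i : Fin n, spars x ω i j
          - (1 / (n : ℝ)) * ∑ i : Fin n, x i j) ^ 2)
      = ∑ j : Fin d, ∑ F : Finset (Fin n), (p ^ F.card * (1 - p) ^ (n - F.card)) *
          ((n : ℝ)⁻¹ * q * (∑ i ∈ F, x i j) - (n : ℝ)⁻¹ * ∑ i : Fin n, x i j) ^ 2 := by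
    have h := exp_eq (n := n) hk hkd (fun j F =>
      ((n : ℝ)⁻¹ * q * (∑ i ∈ F, x i j) - (n : ℝ)⁻¹ * ∑ i : Fin n, x i j) ^ 2)
    rw [← hp] at h
    rw [← h]
    congr 1
    funext ω
    refine Finset.sum_congr rfl fun j _ => ?_
    have hsum : ∑ i : Fin n, spars x ω i j
        = ∑ i ∈ univ.filter fun i : Fin n => j ∈ (ω i).1, x i j := by
      rw [Finset.sum_filter]
      simp only [spars]
    rw [hsum, one_div, hqdef]
  -- per-coordinate difference
  have hdiff : ∀ j : Fin d,
      (∑ F : Finset (Fin n), (p ^ F.card * (1 - p) ^ (n - F.card)) *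
          ((n : ℝ)⁻¹ * (β / T F.card) * (∑ i ∈ F, x i j)
            - (n : ℝ)⁻¹ * ∑ i : Fin n, x i j) ^ 2)
        - (∑ F : Finset (Fin n), (p ^ F.card * (1 - p) ^ (n - F.card)) *
          ((n : ℝ)⁻¹ * q * (∑ i ∈ F, x i j) - (n : ℝ)⁻¹ * ∑ i : Fin n, x i j) ^ 2)
        = (n : ℝ)⁻¹ ^ 2 * (c1 * (∑ i : Fin n, (x i j) ^ 2)
            - c2 * (2 * ∑ i : Fin n, ∑ l : Fin n, (if i < l then x i j * x l j else 0))) := by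
    intro j
    have h := perj hn (fun i => x i j) p q hq (fun m => β / T m) c1 c2 hVG1 hVG1sq hVG2sq
    exact h
  -- sum over coordinates
  have htotal : (∑ j : Fin d, ∑ F : Finset (Fin n), (p ^ F.card * (1 - p) ^ (n - F.card)) *
          ((n : ℝ)⁻¹ * (β / T F.card) * (∑ i ∈ F, x i j)
            - (n : ℝ)⁻¹ * ∑ i : Fin n, x i j) ^ 2)
      - (∑ j : Fin d, ∑ F : Finset (Fin n), (p ^ F.card * (1 - p) ^ (n - F.card)) *
          ((n : ℝ)⁻¹ * q * (∑ i ∈ F, x i j) - (n : ℝ)⁻¹ * ∑ i : Fin n, x i j) ^ 2)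
      = (n : ℝ)⁻¹ ^ 2 * (c1 * R1 - c2 * R2) := by
    rw [← Finset.sum_sub_distrib, Finset.sum_congr rfl fun j _ => hdiff j]
    rw [← Finset.mul_sum]
    congr 1
    rw [Finset.sum_sub_distrib, ← Finset.mul_sum]
    have hR1' : ∑ j : Fin d, ∑ i : Fin n, (x i j) ^ 2 = R1 := by
      rw [hR1]
      exact Finset.sum_comm
    have hR2' : ∑ j : Fin d, (c2 * (2 * ∑ i : Fin n, ∑ l : Fin n,
        (if i < l then x i j * x l j else 0))) = c2 * R2 := by
      have hc : ∀ j : Fin d, c2 * (2 * ∑ i : Fin n, ∑ l : Fin n,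
          (if i < l then x i j * x l j else 0))
          = (c2 * 2) * ∑ i : Fin n, ∑ l : Fin n,
            (if i < l then x i j * x l j else 0) := fun j => by ring
      rw [Finset.sum_congr rfl fun j _ => hc j, ← Finset.mul_sum, hR2]
      have hswap : ∑ j : Fin d, ∑ i : Fin n, ∑ l : Fin n,
          (if i < l then x i j * x l j else 0)
          = ∑ i : Fin n, ∑ l : Fin n, (if i < l then ∑ j : Fin d, x i j * x l j else 0) := by
        rw [Finset.sum_comm]
        refine Finset.sum_congr rfl fun i _ => ?_
        rw [Finset.sum_comm]
        refine Finset.sum_congr rfl fun l _ => ?_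
        by_cases hil : i < l
        · simp only [if_pos hil]
        · simp only [if_neg hil, Finset.sum_const_zero]
      rw [hswap]
      ring
    rw [hR1', hR2']
  -- conclude
  have hneg : (n : ℝ)⁻¹ ^ 2 * (c1 * R1 - c2 * R2) < 0 := by
    apply mul_neg_of_pos_of_neg
    · positivity
    · linarith
  rw [hspatial, hrand] at *
  linarith [htotal]
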